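/- Let w ∈ ℚ⟦s⟧, let k be a positive integer and μ ∈ ℚ. In the ring of formal power series in z over ℚ⟦s⟧, define u = Σ_{j≥1} (1/j!) · (∂_s^j w) · k^j · w^{j-1} · z^{k·j} (the formal expansion of w(s + k·w(s)·z^k)/w(s) - 1; note each term contains the factor w^{j-1}, so no division is needed), and define φ = Σ_{n≥0} binom(μ,n) · u^n (the formal binomial series (1+u)^μ, well defined since u has zero constant term in z). Then φ satisfies the partial differential equation (1/k + z^k·(∂_s w)) · (z∂_z φ) = k·z^k·w·(∂_s φ) + μ·k·z^k·(∂_s w)·φ, together with the initial condition φ|_{z=0} = 1. (This says that φ̄_m(z,s) = (w(s + k·w(s)·z^k)/w(s))^{m/k}, with m = μ·k, solves the characterizing PDE of the dequantised conjugated current for fixed leakiness k.) -/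

import Mathlib

open Finset PowerSeries

/-- The generalized binomial coefficient `binom(α, n) = α(α-1)⋯(α-n+1)/n!`. -/
noncomputable def qbinom (α : ℚ) (n : ℕ) : ℚ :=
  (∏ i ∈ Finset.range n, (α - i)) / Nat.factorial n

/-- `u = Σ_{j≥1} (1/j!)·(∂_s^j w)·k^j·w^{j-1}·z^{k·j}`, the formal expansion of
`w(s + k·w(s)·z^k)/w(s) - 1`, as a power series in `z` over `ℚ⟦s⟧`.  Since
`k ≥ 1`, the coefficient of `z^d` is nonzero only for `d = k·j` with `j ≥ 1`,
in which case `j = d/k`. -/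
noncomputable def uSeries (k : ℕ) (w : PowerSeries ℚ) :
    PowerSeries (PowerSeries ℚ) :=
  PowerSeries.mk fun d =>
    if k ∣ d ∧ d ≠ 0 then
      PowerSeries.C ((1 / (Nat.factorial (d / k)) : ℚ) * (k : ℚ) ^ (d / k)) *
        ((⇑(PowerSeries.derivative ℚ))^[d / k] w) * w ^ (d / k - 1)
    else 0

/-- `φ = Σ_{n≥0} binom(μ,n)·u^n`, the formal binomial series `(1+u)^μ`
(well defined since `u` has zero constant term in `z`). -/
noncomputable def phiSeries (k : ℕ) (w : PowerSeries ℚ) (μ : ℚ) :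
    PowerSeries (PowerSeries ℚ) :=
  PowerSeries.mk fun d =>
    ∑ n ∈ Finset.range (d + 1),
      PowerSeries.C (qbinom μ n) *
        PowerSeries.coeff d ((uSeries k w) ^ n)

/-- The derivative `∂_s` in `s`, applied coefficientwise to a power series in
`z` with coefficients in `ℚ⟦s⟧`. -/
noncomputable def Ds (f : PowerSeries (PowerSeries ℚ)) :
    PowerSeries (PowerSeries ℚ) :=
  PowerSeries.mk fun d =>
    PowerSeries.derivative ℚ (PowerSeries.coeff d f)

/-- The operator `z∂_z`, multiplying the coefficient of `z^n` by `n`. -/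
noncomputable def zDz (f : PowerSeries (PowerSeries ℚ)) :
    PowerSeries (PowerSeries ℚ) :=
  PowerSeries.mk fun d =>
    ((d : ℕ) : PowerSeries ℚ) * PowerSeries.coeff d f

noncomputable abbrev RR := PowerSeries ℚ
noncomputable abbrev AA := PowerSeries RR

lemma coeff_Ds (f : AA) (d : ℕ) :
    coeff d (Ds f) = derivative ℚ (coeff d f) := coeff_mk _ _

lemma coeff_zDz (f : AA) (d : ℕ) :
    coeff d (zDz f) = (d : RR) * coeff d f := coeff_mk _ _


lemma Ds_add (f g : AA) : Ds (f + g) = Ds f + Ds g := by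
  refine PowerSeries.ext fun d => ?_; simp [coeff_Ds]

lemma zDz_add (f g : AA) : zDz (f + g) = zDz f + zDz g := by
  refine PowerSeries.ext fun d => ?_; simp [coeff_zDz]; ring_nf

lemma Ds_mul (f g : AA) : Ds (f * g) = Ds f * g + f * Ds g := by
  refine PowerSeries.ext fun d => ?_
  simp only [coeff_Ds, map_add, PowerSeries.coeff_mul, map_sum]
  rw [← Finset.sum_add_distrib]
  refine Finset.sum_congr rfl fun p hp => ?_
  rw [Derivation.leibniz, smul_eq_mul, smul_eq_mul]
  ring

lemma zDz_mul (f g : AA) : zDz (f * g) = zDz f * g + f * zDz g := by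
  refine PowerSeries.ext fun d => ?_
  simp only [coeff_zDz, map_add, PowerSeries.coeff_mul, map_sum]
  rw [Finset.mul_sum, ← Finset.sum_add_distrib]
  refine Finset.sum_congr rfl fun p hp => ?_
  rw [Finset.HasAntidiagonal.mem_antidiagonal] at hp
  rw [← hp]
  push_cast
  ring

lemma Ds_C' (r : RR) : Ds (C r) = C (derivative ℚ r) := by
  refine PowerSeries.ext fun d => ?_
  rw [coeff_Ds, PowerSeries.coeff_C, PowerSeries.coeff_C]
  split_ifs <;> simp

lemma zDz_C' (r : RR) : zDz (C r) = 0 := by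
  refine PowerSeries.ext fun d => ?_
  rw [coeff_zDz, PowerSeries.coeff_C]
  split_ifs with h <;> simp [h]

lemma Ds_one : Ds 1 = 0 := by
  rw [← map_one (C (R := RR)), Ds_C']; simp

lemma zDz_one : zDz 1 = 0 := by
  rw [← map_one (C (R := RR)), zDz_C']

lemma Ds_pow (f : AA) (n : ℕ) :
    Ds (f ^ (n + 1)) = ((n : AA) + 1) * f ^ n * Ds f := by
  induction n with
  | zero => simp [Ds_mul, Ds_one]
  | succ m ih =>
    rw [pow_succ, Ds_mul, ih]
    push_cast
    ring

lemma zDz_pow (f : AA) (n : ℕ) :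
    zDz (f ^ (n + 1)) = ((n : AA) + 1) * f ^ n * zDz f := by
  induction n with
  | zero => simp [zDz_mul, zDz_one]
  | succ m ih =>
    rw [pow_succ, zDz_mul, ih]
    push_cast
    ring

lemma coeff_u (k : ℕ) (w : PowerSeries ℚ) (d : ℕ) :
    coeff d (uSeries k w) =
      if k ∣ d ∧ d ≠ 0 then
        C ((1 / (Nat.factorial (d / k)) : ℚ) * (k : ℚ) ^ (d / k)) *
          ((⇑(derivative ℚ))^[d / k] w) * w ^ (d / k - 1)
      else 0 := coeff_mk _ _

lemma coeff_u_of_not (k : ℕ) (w : PowerSeries ℚ) (d : ℕ) (h : ¬(k ∣ d ∧ d ≠ 0)) :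
    coeff d (uSeries k w) = 0 := by rw [coeff_u, if_neg h]

lemma coeff_Xpow_mul (k : ℕ) (g : AA) (d : ℕ) :
    coeff d (X ^ k * g) = if k ≤ d then coeff (d - k) g else 0 := by
  split_ifs with h
  · obtain ⟨m, rfl⟩ := Nat.exists_eq_add_of_le h
    rw [Nat.add_sub_cancel_left, add_comm, coeff_X_pow_mul]
  · exact X_pow_dvd_iff.mp (dvd_mul_right _ _) d (by omega)

lemma coeff_XCf (k : ℕ) (b : RR) (f : AA) (d : ℕ) :
    coeff d (X ^ k * C b * f) = if k ≤ d then b * coeff (d - k) f else 0 := by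
  rw [mul_assoc, coeff_Xpow_mul]
  split_ifs with h
  · rw [coeff_C_mul]
  · rfl

lemma coeff_CXCf (k : ℕ) (a b : RR) (f : AA) (d : ℕ) :
    coeff d (C a * X ^ k * C b * f) =
      if k ≤ d then a * b * coeff (d - k) f else 0 := by
  rw [show C a * X ^ k * C b * f = C a * (X ^ k * C b * f) by ring,
    coeff_C_mul, coeff_XCf]
  split_ifs with h
  · ring
  · exact mul_zero _

lemma w_mul_derivative_pow (w : PowerSeries ℚ) (i : ℕ) :
    w * derivative ℚ (w ^ i) = C (i : ℚ) * w ^ i * derivative ℚ w := by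
  cases i with
  | zero => simp
  | succ m =>
    rw [Derivation.leibniz_pow, Nat.succ_sub_one, smul_eq_mul, nsmul_eq_mul,
      ← map_natCast (C (R := ℚ)) (m + 1)]
    push_cast
    ring

lemma hu_val (k : ℕ) (hk : 0 < k) (w : PowerSeries ℚ) (j : ℕ) :
    coeff (k * j) (uSeries k w) =
      if j = 0 then 0 else
        C ((1 / (Nat.factorial j) : ℚ) * (k : ℚ) ^ j) *
          ((⇑(derivative ℚ))^[j] w) * w ^ (j - 1) := by
  rw [coeff_u]
  rcases eq_or_ne j 0 with rfl | hj
  · simp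
  · rw [if_pos ⟨⟨j, rfl⟩, by positivity⟩, if_neg hj, Nat.mul_div_cancel_left j hk]

lemma key (k : ℕ) (hk : 0 < k) (w : PowerSeries ℚ) :
    (C (C (1/(k:ℚ))) + X ^ k * C (derivative ℚ w)) * zDz (uSeries k w) =
      C (C (k:ℚ)) * X ^ k * C w * Ds (uSeries k w) +
      C (C (k:ℚ)) * X ^ k * C (derivative ℚ w) * (1 + uSeries k w) := by
  have hk0 : (k : ℚ) ≠ 0 := Nat.cast_ne_zero.mpr hk.ne'
  refine PowerSeries.ext fun d => ?_
  rw [add_mul, map_add, map_add, coeff_C_mul, coeff_XCf, coeff_CXCf, coeff_CXCf, coeff_zDz]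
  by_cases hdvd : k ∣ d
  · obtain ⟨j, rfl⟩ := hdvd
    cases j with
    | zero =>
      rw [Nat.mul_zero]
      simp [coeff_u_of_not, hk.ne', coeff_zDz]
    | succ jj =>
      have hkd : k ≤ k * (jj + 1) := Nat.le_mul_of_pos_right k (by omega)
      have hsub : k * (jj + 1) - k = k * jj := by rw [Nat.mul_succ]; omega
      rw [if_pos hkd, if_pos hkd, if_pos hkd, hsub, coeff_zDz, coeff_Ds, map_add,
        hu_val k hk w (jj + 1), hu_val k hk w jj, coeff_one,
        if_neg (Nat.succ_ne_zero jj)]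
      cases jj with
      | zero =>
        norm_num [Function.iterate_one]
        rw [← map_natCast (C (R := ℚ)) k]
        have hC : (C (R := ℚ)) ((k:ℚ))⁻¹ * C (k:ℚ) * C (k:ℚ) = C (k:ℚ) := by
          rw [← map_mul, ← map_mul, inv_mul_cancel₀ hk0, one_mul]
        linear_combination (derivative ℚ w) * hC
      | succ ii =>
        rw [if_neg (Nat.succ_ne_zero _), if_neg (by positivity : k * (ii+1) ≠ 0)]
        have hD : derivative ℚ ((C (R := ℚ)) (1 / (((ii+1).factorial : ℚ)) * (k:ℚ) ^ (ii+1)) *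
              (⇑(derivative ℚ))^[ii+1] w * w ^ (ii+1-1))
            = C (1 / (((ii+1).factorial : ℚ)) * (k:ℚ) ^ (ii+1)) *
              ((⇑(derivative ℚ))^[ii+1+1] w * w ^ ii +
                (⇑(derivative ℚ))^[ii+1] w * derivative ℚ (w ^ ii)) := by
          rw [Nat.add_sub_cancel, Derivation.leibniz, Derivation.leibniz, derivative_C,
            show derivative ℚ ((⇑(derivative ℚ))^[ii+1] w) = (⇑(derivative ℚ))^[ii+1+1] w from
              (Function.iterate_succ_apply' _ _ _).symm]
          simp only [smul_eq_mul]
          ring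
        rw [hD]
        simp only [Nat.add_sub_cancel]
        rw [← map_natCast (C (R := ℚ)) (k*(ii+1+1)),
          ← map_natCast (C (R := ℚ)) (k*(ii+1))]
        have hfac : (((ii+1+1).factorial : ℚ)) = (ii+1+1) * (((ii+1).factorial : ℚ)) := by
          rw [Nat.factorial_succ]; push_cast; ring
        have hf1 : (((ii+1).factorial : ℚ)) ≠ 0 := Nat.cast_ne_zero.mpr (Nat.factorial_ne_zero _)
        have h1 : C (1/(k:ℚ)) * C ((k*(ii+1+1) : ℕ) : ℚ) *
              C (1/(((ii+1+1).factorial : ℚ)) * (k:ℚ)^(ii+1+1)) =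
            C ((k:ℕ):ℚ) * C (1/(((ii+1).factorial : ℚ)) * (k:ℚ)^(ii+1)) := by
          rw [← map_mul, ← map_mul, ← map_mul]
          congr 1
          rw [hfac]
          push_cast
          field_simp
          ring
        have h2 : C ((k*(ii+1) : ℕ) : ℚ) *
              C (1/(((ii+1).factorial : ℚ)) * (k:ℚ)^(ii+1)) =
            C ((k:ℕ):ℚ) * C (1/(((ii+1).factorial : ℚ)) * (k:ℚ)^(ii+1)) * C ((ii:ℕ):ℚ) +
            C ((k:ℕ):ℚ) * C (1/(((ii+1).factorial : ℚ)) * (k:ℚ)^(ii+1)) := by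
          simp only [← map_mul, ← map_add]
          congr 1
          push_cast
          ring
        linear_combination ((⇑(derivative ℚ))^[ii+1+1] w * w^(ii+1)) * h1 +
          (derivative ℚ w * (⇑(derivative ℚ))^[ii+1] w * w^ii) * h2 -
          (C ((k:ℕ):ℚ) * C (1/(((ii+1).factorial : ℚ)) * (k:ℚ)^(ii+1)) *
            (⇑(derivative ℚ))^[ii+1] w) * (w_mul_derivative_pow w ii)
  · have h1 : ¬(k ∣ d ∧ d ≠ 0) := fun h => hdvd h.1
    rw [coeff_u_of_not k w d h1]
    split_ifs with h
    · have h2 : coeff (d - k) (uSeries k w) = 0 := by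
        apply coeff_u_of_not
        rintro ⟨hd2, _⟩
        exact hdvd ((Nat.sub_add_cancel h) ▸ dvd_add hd2 dvd_rfl)
      have h3 : d - k ≠ 0 := fun h0 => hdvd ⟨1, by omega⟩
      rw [coeff_zDz, coeff_Ds, h2, map_add, coeff_one, if_neg h3]
      simp [h2]
    · simp

lemma qbinom_zero (α : ℚ) : qbinom α 0 = 1 := by simp [qbinom]

lemma qbinom_rec (α : ℚ) (n : ℕ) :
    ((n : ℚ) + 1) * qbinom α (n + 1) = (α - n) * qbinom α n := by
  rw [qbinom, qbinom, Finset.prod_range_succ, Nat.factorial_succ]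
  push_cast
  have h1 : ((Nat.factorial n : ℚ)) ≠ 0 := Nat.cast_ne_zero.mpr (Nat.factorial_ne_zero _)
  field_simp

noncomputable def phiT (k : ℕ) (w : PowerSeries ℚ) (μ : ℚ) (N : ℕ) : AA :=
  ∑ n ∈ Finset.range (N + 1), C (C (qbinom μ n)) * (uSeries k w) ^ n

lemma single_step (k : ℕ) (hk : 0 < k) (w : PowerSeries ℚ) (μ : ℚ) (N : ℕ) :
    (C (C (1/(k:ℚ))) + X ^ k * C (derivative ℚ w)) *
        zDz (C (C (qbinom μ (N+1))) * (uSeries k w) ^ (N+1)) =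
      C (C (k:ℚ)) * X ^ k * C w *
          Ds (C (C (qbinom μ (N+1))) * (uSeries k w) ^ (N+1)) +
        C (C (μ * (k:ℚ))) * X ^ k * C (derivative ℚ w) *
          (C (C (qbinom μ (N+1))) * (uSeries k w) ^ (N+1)) +
        C (C ((k:ℚ) * ((N:ℚ)+1) * qbinom μ (N+1))) * X ^ k *
          C (derivative ℚ w) * (uSeries k w) ^ N -
        C (C ((k:ℚ) * (((N+1:ℕ):ℚ)+1) * qbinom μ (N+1+1))) * X ^ k *
          C (derivative ℚ w) * (uSeries k w) ^ (N+1) := by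
  rw [zDz_mul, zDz_C', Ds_mul, Ds_C', derivative_C, map_zero, zDz_pow, Ds_pow]
  have hNc : ((N : ℕ) : AA) + 1 = C (C ((N:ℚ)+1)) := by
    simp [map_natCast]
  rw [hNc]
  have hX : C (C (qbinom μ (N+1))) * C (C ((N:ℚ)+1)) * C (C (k:ℚ)) =
      C (C ((k:ℚ) * ((N:ℚ)+1) * qbinom μ (N+1))) := by
    simp only [← map_mul]
    congr 1
    ring
  have hY : C (C (μ * (k:ℚ))) * C (C (qbinom μ (N+1))) =
      C (C ((k:ℚ) * ((N:ℚ)+1) * qbinom μ (N+1))) +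
      C (C ((k:ℚ) * (((N+1:ℕ):ℚ)+1) * qbinom μ (N+1+1))) := by
    have hrec := qbinom_rec μ (N+1)
    have hq : μ * (k:ℚ) * qbinom μ (N+1) =
        (k:ℚ) * ((N:ℚ)+1) * qbinom μ (N+1) +
        (k:ℚ) * (((N+1:ℕ):ℚ)+1) * qbinom μ (N+1+1) := by
      push_cast at hrec ⊢
      linear_combination (-(k:ℚ)) * hrec
    simp only [← map_mul, ← map_add, hq]
  linear_combination (C (C (qbinom μ (N+1))) * C (C ((N:ℚ)+1)) * (uSeries k w)^N) *
      key k hk w +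
    (X ^ k * C (derivative ℚ w) * ((uSeries k w)^N + (uSeries k w)^(N+1))) * hX -
    (X ^ k * C (derivative ℚ w) * (uSeries k w)^(N+1)) * hY

lemma trunc_pde (k : ℕ) (hk : 0 < k) (w : PowerSeries ℚ) (μ : ℚ) (N : ℕ) :
    (C (C (1/(k:ℚ))) + X ^ k * C (derivative ℚ w)) * zDz (phiT k w μ N) =
      C (C (k:ℚ)) * X ^ k * C w * Ds (phiT k w μ N) +
        C (C (μ * (k:ℚ))) * X ^ k * C (derivative ℚ w) * phiT k w μ N -
        C (C ((k:ℚ) * ((N:ℚ)+1) * qbinom μ (N+1))) * X ^ k *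
          C (derivative ℚ w) * (uSeries k w) ^ N := by
  induction N with
  | zero =>
    rw [phiT, Finset.sum_range_one, pow_zero, mul_one, qbinom_zero, map_one, map_one,
      zDz_one, Ds_one]
    have hq : qbinom μ (0+1) = μ := by simp [qbinom]
    rw [hq, show ((k:ℚ) * (((0:ℕ):ℚ)+1) * μ) = μ * (k:ℚ) from by push_cast; ring]
    ring
  | succ N ih =>
    rw [phiT, Finset.sum_range_succ, ← phiT, zDz_add, Ds_add]
    linear_combination ih + single_step k hk w μ N

lemma constantCoeff_u (k : ℕ) (w : PowerSeries ℚ) :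
    constantCoeff (uSeries k w) = 0 := by
  rw [← coeff_zero_eq_constantCoeff_apply, coeff_u_of_not]
  simp

lemma coeff_u_pow (k : ℕ) (w : PowerSeries ℚ) (n d : ℕ) (h : d < n) :
    coeff d ((uSeries k w) ^ n) = 0 := by
  have hX : (X : AA) ∣ uSeries k w := X_dvd_iff.mpr (constantCoeff_u k w)
  exact X_pow_dvd_iff.mp (pow_dvd_pow_of_dvd hX n) d h

lemma coeff_mul_congr (G f g : AA) (d : ℕ)
    (h : ∀ j, j ≤ d → coeff j f = coeff j g) :
    coeff d (G * f) = coeff d (G * g) := by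
  rw [PowerSeries.coeff_mul, PowerSeries.coeff_mul]
  refine Finset.sum_congr rfl fun p hp => ?_
  rw [Finset.HasAntidiagonal.mem_antidiagonal] at hp
  rw [h p.2 (by omega)]

lemma coeff_phi_trunc (k : ℕ) (w : PowerSeries ℚ) (μ : ℚ) {d N : ℕ} (hdN : d ≤ N) :
    coeff d (phiSeries k w μ) = coeff d (phiT k w μ N) := by
  rw [phiSeries, coeff_mk, phiT, map_sum]
  simp only [coeff_C_mul]
  refine Finset.sum_subset (Finset.range_subset_range.mpr (by omega)) fun n hn hn2 => ?_
  rw [Finset.mem_range] at hn hn2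
  rw [coeff_u_pow k w n d (by omega), mul_zero]


/-- Let `w ∈ ℚ⟦s⟧`, `k` a positive integer and `μ ∈ ℚ`.
With `u = Σ_{j≥1} (1/j!)·(∂_s^j w)·k^j·w^{j-1}·z^{k·j}` and
`φ = Σ_{n≥0} binom(μ,n)·u^n`, the series `φ` satisfies
`(1/k + z^k·(∂_s w))·(z∂_z φ) = k·z^k·w·(∂_s φ) + μ·k·z^k·(∂_s w)·φ`
and `φ|_{z=0} = 1`.  (I.e. `φ̄_m(z,s) = (w(s+k·w(s)·z^k)/w(s))^{m/k}`, with
`m = μ·k`, solves the characterizing PDE of the dequantised conjugated current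
for fixed leakiness `k`.) -/
theorem dequantised_conjugated_current_PDE
    (k : ℕ) (hk : 0 < k) (w : PowerSeries ℚ) (μ : ℚ) :
    ((PowerSeries.C (PowerSeries.C (1 / (k : ℚ))) +
        PowerSeries.X ^ k *
          PowerSeries.C (PowerSeries.derivative ℚ w)) *
        zDz (phiSeries k w μ) =
      PowerSeries.C (PowerSeries.C (k : ℚ)) * PowerSeries.X ^ k *
          PowerSeries.C w * Ds (phiSeries k w μ) +
        PowerSeries.C (PowerSeries.C (μ * k)) * PowerSeries.X ^ k *
          PowerSeries.C (PowerSeries.derivative ℚ w) *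
          phiSeries k w μ) ∧
    PowerSeries.constantCoeff (phiSeries k w μ) = 1 := by
  constructor
  · refine PowerSeries.ext fun d => ?_
    have hzDz : ∀ j, j ≤ d →
        coeff j (zDz (phiSeries k w μ)) = coeff j (zDz (phiT k w μ d)) :=
      fun j hj => by rw [coeff_zDz, coeff_zDz, coeff_phi_trunc k w μ hj]
    have hDs : ∀ j, j ≤ d →
        coeff j (Ds (phiT k w μ d)) = coeff j (Ds (phiSeries k w μ)) :=
      fun j hj => by rw [coeff_Ds, coeff_Ds, coeff_phi_trunc k w μ hj]
    have hphi : ∀ j, j ≤ d →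
        coeff j (phiT k w μ d) = coeff j (phiSeries k w μ) :=
      fun j hj => (coeff_phi_trunc k w μ hj).symm
    have herr : coeff d (C (C ((k:ℚ) * ((d:ℚ)+1) * qbinom μ (d+1))) * X ^ k *
        C (derivative ℚ w) * (uSeries k w) ^ d) = 0 := by
      rw [coeff_CXCf]
      split_ifs with h
      · rw [coeff_u_pow k w d (d - k) (by omega), mul_zero]
      · rfl
    calc coeff d ((C (C (1/(k:ℚ))) + X ^ k * C (derivative ℚ w)) *
            zDz (phiSeries k w μ))
        = coeff d ((C (C (1/(k:ℚ))) + X ^ k * C (derivative ℚ w)) *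
            zDz (phiT k w μ d)) := coeff_mul_congr _ _ _ d hzDz
      _ = coeff d (C (C (k:ℚ)) * X ^ k * C w * Ds (phiT k w μ d) +
            C (C (μ * (k:ℚ))) * X ^ k * C (derivative ℚ w) * phiT k w μ d -
            C (C ((k:ℚ) * ((d:ℚ)+1) * qbinom μ (d+1))) * X ^ k *
              C (derivative ℚ w) * (uSeries k w) ^ d) := by
          rw [trunc_pde k hk w μ d]
      _ = coeff d (C (C (k:ℚ)) * X ^ k * C w * Ds (phiT k w μ d)) +
            coeff d (C (C (μ * (k:ℚ))) * X ^ k * C (derivative ℚ w) *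
              phiT k w μ d) := by
          rw [map_sub, map_add, herr, sub_zero]
      _ = _ := by
          rw [coeff_mul_congr _ _ _ d hDs, coeff_mul_congr _ _ _ d hphi, map_add]
  · rw [← coeff_zero_eq_constantCoeff_apply, phiSeries, coeff_mk]
    simp [qbinom]
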